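/- arXiv:1103.3546 — 2 statements merged into one kernel-verified Lean document; each statement's English description precedes it below -/
import Mathlib

section
/- The isometry group of the hyperbolic group ℍ_n (with its standard pairing) is isomorphic to SL(2, ℤ/n), and this group is generated by the two transvections s_{u₁} and s_{v₁}, where u₁ = (1,0) and v₁ = (0,1). -/
/-- omega_n = e^{2 pi i/n} as a unit of the complex numbers. -/
noncomputable def omegaU (n : ℕ) : ℂˣ :=
  Units.mk0 (Complex.exp (2 * Real.pi * Complex.I / n)) (Complex.exp_ne_zero _)

/-- Z-bilinearity of a pairing into the unit group of the complex numbers. -/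
def IsBilinPairing {H : Type*} [AddCommGroup H] (f : H → H → ℂˣ) : Prop :=
  (∀ a b c : H, f (a + b) c = f a c * f b c) ∧ (∀ a b c : H, f a (b + c) = f a b * f a c)

/-- Antisymmetry: <a,b> = <b,a>⁻¹. -/
def IsAntisymmPairing {H : Type*} [AddCommGroup H] (f : H → H → ℂˣ) : Prop :=
  ∀ a b : H, f a b = (f b a)⁻¹

/-- Nonsingularity of a pairing: <a,b> = 1 for all b implies a = 0. -/
def IsNonsingularPairing {H : Type*} [AddCommGroup H] (f : H → H → ℂˣ) : Prop :=
  ∀ a : H, (∀ b : H, f a b = 1) → a = 0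

/-- The standard pairing on the hyperbolic group H_n = Z/n × Z/n:
<(i,j),(k,l)> = omega_n^{il - jk}. -/
noncomputable def hypPair (n : ℕ) (a b : ZMod n × ZMod n) : ℂˣ :=
  omegaU n ^ (a.1 * b.2 - a.2 * b.1).val

/-- The group structure on `AddAut A` of the older library (composition), which the current
library replaced by an additive one. -/
instance addAutGroupOld (A : Type*) [Add A] : Group (AddAut A) where
  mul g h := AddEquiv.trans h g
  one := AddEquiv.refl _
  inv := AddEquiv.symm
  mul_assoc _ _ _ := rfl
  one_mul _ := rfl
  mul_one _ := rfl
  inv_mul_cancel := AddEquiv.self_trans_symm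

/-- The isometry group Sp(H) of a pairing, as a subgroup of the automorphism group. -/
def SpGroup {H : Type*} [AddCommGroup H] (f : H → H → ℂˣ) : Subgroup (AddAut H) where
  carrier := {e | ∀ a b : H, f (e a) (e b) = f a b}
  one_mem' := fun _ _ => rfl
  mul_mem' := by
    intro e g he hg a b
    have h1 : ∀ x, (e * g) x = e (g x) := fun x => rfl
    rw [h1, h1, he, hg]
  inv_mem' := by
    intro e he a b
    have := he (e⁻¹ a) (e⁻¹ b)
    have h2 : ∀ x, e (e⁻¹ x) = x := fun x => e.apply_symm_apply x
    rw [h2, h2] at this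
    exact this.symm

/-- e is a transvection s_{b,k} for the pairing f: for some nonzero b and k ∈ ℤ,
e sends a to a - k·j(a)·b where <b,a> = ω_m^{j(a)} and m is the order of b. -/
def IsTransvection {H : Type*} [AddCommGroup H] (f : H → H → ℂˣ) (e : AddAut H) : Prop :=
  ∃ b : H, b ≠ 0 ∧ ∃ k : ℤ, ∀ a : H, ∃ j : ℤ,
    f b a = omegaU (addOrderOf b) ^ j ∧ e a = a - (k * j) • b

/-- e is a transvection s_b (with k = 1) for the pairing f. -/
def IsTransvection1 {H : Type*} [AddCommGroup H] (f : H → H → ℂˣ) (e : AddAut H) : Prop :=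
  ∃ b : H, b ≠ 0 ∧ ∀ a : H, ∃ j : ℤ,
    f b a = omegaU (addOrderOf b) ^ j ∧ e a = a - j • b

/-- The transvection s_{u₁} with u₁ = (1,0): (x,y) ↦ (x - y, y). -/
def suAut (n : ℕ) : AddAut (ZMod n × ZMod n) :=
  { toFun := fun a => (a.1 - a.2, a.2)
    invFun := fun a => (a.1 + a.2, a.2)
    left_inv := fun a => by simp
    right_inv := fun a => by simp
    map_add' := fun a b => by
      simp only [Prod.fst_add, Prod.snd_add, Prod.mk_add_mk, Prod.mk.injEq]
      constructor <;> first | trivial | ring }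

/-- The transvection s_{v₁} with v₁ = (0,1): (x,y) ↦ (x, y + x). -/
def svAut (n : ℕ) : AddAut (ZMod n × ZMod n) :=
  { toFun := fun a => (a.1, a.2 + a.1)
    invFun := fun a => (a.1, a.2 - a.1)
    left_inv := fun a => by simp
    right_inv := fun a => by simp
    map_add' := fun a b => by
      simp only [Prod.fst_add, Prod.snd_add, Prod.mk_add_mk, Prod.mk.injEq]
      constructor <;> first | trivial | ring }


set_option linter.unusedSectionVars false
open Matrix

variable (n : ℕ) [NeZero n]

lemma omega_pow_inj {i j : ZMod n} (h : omegaU n ^ i.val = omegaU n ^ j.val) : i = j := by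
  have hprim : IsPrimitiveRoot (Complex.exp (2 * Real.pi * Complex.I / n)) n :=
    Complex.isPrimitiveRoot_exp n (NeZero.ne n)
  have h' : Complex.exp (2 * Real.pi * Complex.I / n) ^ i.val
      = Complex.exp (2 * Real.pi * Complex.I / n) ^ j.val := by
    have := congrArg Units.val h
    simpa [omegaU] using this
  have := hprim.pow_inj (ZMod.val_lt i) (ZMod.val_lt j) h'
  have h1 : ((i.val : ℕ) : ZMod n) = ((j.val : ℕ) : ZMod n) := by rw [this]
  simpa [ZMod.natCast_val, ZMod.cast_id] using h1

lemma hypPair_eq_iff (x y z w : ZMod n × ZMod n) :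
    hypPair n x y = hypPair n z w ↔
      x.1 * y.2 - x.2 * y.1 = z.1 * w.2 - z.2 * w.1 := by
  constructor
  · intro h; exact omega_pow_inj n h
  · intro h; simp [hypPair, h]

lemma addAut_zsmul' (e : AddAut (ZMod n × ZMod n)) (x : ZMod n) (v : ZMod n × ZMod n) :
    e (x • v) = x • e v := by
  have hx : ((x.val : ℕ) : ZMod n) = x := by simp [ZMod.natCast_val, ZMod.cast_id]
  have h1 : x • v = x.val • v := by
    conv_lhs => rw [← hx]
    rw [Nat.cast_smul_eq_nsmul]
  have h2 : x • e v = x.val • e v := by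
    conv_lhs => rw [← hx]
    rw [Nat.cast_smul_eq_nsmul]
  rw [h1, h2, map_nsmul]

def Mof (e : AddAut (ZMod n × ZMod n)) : Matrix (Fin 2) (Fin 2) (ZMod n) :=
  !![(e (1,0)).1, (e (0,1)).1; (e (1,0)).2, (e (0,1)).2]

lemma apply_eq (e : AddAut (ZMod n × ZMod n)) (v : ZMod n × ZMod n) :
    e v = (Mof n e 0 0 * v.1 + Mof n e 0 1 * v.2, Mof n e 1 0 * v.1 + Mof n e 1 1 * v.2) := by
  have hv : v = v.1 • ((1,0) : ZMod n × ZMod n) + v.2 • ((0,1) : ZMod n × ZMod n) := by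
    simp [Prod.ext_iff]
  calc e v = e (v.1 • ((1,0) : ZMod n × ZMod n) + v.2 • ((0,1) : ZMod n × ZMod n)) := by rw [← hv]
    _ = v.1 • e (1,0) + v.2 • e (0,1) := by
        rw [map_add, addAut_zsmul', addAut_zsmul']
    _ = _ := by
        simp [Mof, Prod.ext_iff, Prod.smul_fst, Prod.smul_snd, smul_eq_mul]; constructor <;> ring

abbrev SL2 := Matrix.SpecialLinearGroup (Fin 2) (ZMod n)

def E12 (t : ZMod n) : SL2 n := ⟨!![1, t; 0, 1], by simp [Matrix.det_fin_two_of]⟩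
def E21 (t : ZMod n) : SL2 n := ⟨!![1, 0; t, 1], by simp [Matrix.det_fin_two_of]⟩
def Tg : SL2 n := E12 n (-1)
def Lg : SL2 n := E21 n 1

lemma E12_mul (s t : ZMod n) : E12 n s * E12 n t = E12 n (s + t) := by
  apply Subtype.ext
  show (!![1, s; 0, 1] : Matrix (Fin 2) (Fin 2) (ZMod n)) * !![1, t; 0, 1] = _
  rw [Matrix.mul_fin_two]; congr 1 <;> ring

lemma E21_mul (s t : ZMod n) : E21 n s * E21 n t = E21 n (s + t) := by
  apply Subtype.ext
  show (!![1, 0; s, 1] : Matrix (Fin 2) (Fin 2) (ZMod n)) * !![1, 0; t, 1] = _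
  rw [Matrix.mul_fin_two]; congr 1 <;> ring

lemma E12_zero : E12 n 0 = 1 := by
  apply Subtype.ext
  show (!![1, 0; 0, 1] : Matrix (Fin 2) (Fin 2) (ZMod n)) = 1
  rw [Matrix.one_fin_two]

lemma E21_zero : E21 n 0 = 1 := by
  apply Subtype.ext
  show (!![1, 0; 0, 1] : Matrix (Fin 2) (Fin 2) (ZMod n)) = 1
  rw [Matrix.one_fin_two]

def Hgen : Subgroup (SL2 n) := Subgroup.closure {Tg n, Lg n}

lemma E12_mem (t : ZMod n) : E12 n t ∈ Hgen n := by
  have hT : Tg n ∈ Hgen n := Subgroup.subset_closure (Or.inl rfl)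
  have key : ∀ m : ℕ, E12 n (-(m : ZMod n)) ∈ Hgen n := by
    intro m
    induction m with
    | zero => simpa [E12_zero] using (Hgen n).one_mem
    | succ k ih =>
        have := (Hgen n).mul_mem ih hT
        rw [Tg, E12_mul] at this
        convert this using 2
        push_cast; ring
  have : t = -(((-t).val : ℕ) : ZMod n) := by simp [ZMod.natCast_val, ZMod.cast_id]
  rw [this]; exact key _

lemma E21_mem (t : ZMod n) : E21 n t ∈ Hgen n := by
  have hL : Lg n ∈ Hgen n := Subgroup.subset_closure (Or.inr rfl)
  have key : ∀ m : ℕ, E21 n ((m : ZMod n)) ∈ Hgen n := by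
    intro m
    induction m with
    | zero => simpa [E21_zero] using (Hgen n).one_mem
    | succ k ih =>
        have := (Hgen n).mul_mem ih hL
        rw [Lg, E21_mul] at this
        convert this using 2
        push_cast; ring
  have : t = ((t.val : ℕ) : ZMod n) := by simp [ZMod.natCast_val, ZMod.cast_id]
  rw [this]; exact key _

lemma E12_inv (t : ZMod n) : (E12 n t)⁻¹ = E12 n (-t) := by
  apply inv_eq_of_mul_eq_one_right
  rw [E12_mul]; simp [E12_zero]

def Sg : SL2 n := ⟨!![0, -1; 1, 0], by simp [Matrix.det_fin_two_of]⟩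

lemma Sg_mem : Sg n ∈ Hgen n := by
  have h : Sg n = Tg n * Lg n * Tg n := by
    apply Subtype.ext
    show (!![0,-1;1,0] : Matrix (Fin 2) (Fin 2) (ZMod n)) = !![1,-1;0,1] * !![1,0;1,1] * !![1,-1;0,1]
    rw [Matrix.mul_fin_two, Matrix.mul_fin_two]; congr 1 <;> ring
  rw [h]
  exact (Hgen n).mul_mem ((Hgen n).mul_mem (Subgroup.subset_closure (Or.inl rfl))
    (Subgroup.subset_closure (Or.inr rfl))) (Subgroup.subset_closure (Or.inl rfl))

lemma diag_mem (u d : ZMod n) (h : u * d = 1) :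
    (⟨!![u, 0; 0, d], by simp [Matrix.det_fin_two_of, h]⟩ : SL2 n) ∈ Hgen n := by
  have key : (⟨!![u, 0; 0, d], by simp [Matrix.det_fin_two_of, h]⟩ : SL2 n)
      = E12 n u * E21 n (-d) * E12 n u * Sg n := by
    apply Subtype.ext
    show (!![u,0;0,d] : Matrix (Fin 2) (Fin 2) (ZMod n))
      = !![1,u;0,1] * !![1,0;-d,1] * !![1,u;0,1] * !![0,-1;1,0]
    rw [Matrix.mul_fin_two, Matrix.mul_fin_two, Matrix.mul_fin_two]
    ext i j
    fin_cases i <;> fin_cases j <;> simp <;>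
      first
        | rfl
        | linear_combination (-u) * h
        | linear_combination h
        | linear_combination -h
  rw [key]
  exact (Hgen n).mul_mem ((Hgen n).mul_mem ((Hgen n).mul_mem (E12_mem n u) (E21_mem n (-d)))
    (E12_mem n u)) (Sg_mem n)

lemma eta_SL2 (A : SL2 n) : (A : Matrix (Fin 2) (Fin 2) (ZMod n))
    = !![A.1 0 0, A.1 0 1; A.1 1 0, A.1 1 1] := Matrix.eta_fin_two _

lemma main_aux : ∀ m : ℕ, ∀ A : SL2 n, (A.1 1 0).val = m → A ∈ Hgen n := by
  intro m
  induction m using Nat.strong_induction_on with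
  | _ m IH =>
    intro A hA
    have hdet : A.1 0 0 * A.1 1 1 - A.1 0 1 * A.1 1 0 = 1 := by
      have := A.2; rwa [Matrix.det_fin_two] at this
    rcases Nat.eq_zero_or_pos m with hm | hm
    · -- lower-left entry is zero
      have hc : A.1 1 0 = 0 := by
        rw [← ZMod.val_eq_zero, hA, hm]
      have h1 : A.1 0 0 * A.1 1 1 = 1 := by
        rw [hc] at hdet; simpa using hdet
      obtain ⟨D, hD⟩ : ∃ D : SL2 n, (D : Matrix (Fin 2) (Fin 2) (ZMod n))
          = !![A.1 0 0, 0; 0, A.1 1 1] :=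
        ⟨⟨_, by simp [Matrix.det_fin_two_of, h1]⟩, rfl⟩
      have key : A = D * E12 n (A.1 1 1 * A.1 0 1) := by
        apply Subtype.ext
        show (A : Matrix (Fin 2) (Fin 2) (ZMod n))
          = (D : Matrix (Fin 2) (Fin 2) (ZMod n)) * !![1, A.1 1 1 * A.1 0 1; 0, 1]
        rw [hD, Matrix.mul_fin_two]
        nth_rewrite 1 [eta_SL2 n A]
        rw [hc]
        ext i j
        fin_cases i <;> fin_cases j
        · simp
        · simp
          linear_combination (-(A.1 0 1)) * h1
        · simp
        · simp
      rw [key]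
      have hDmem : D ∈ Hgen n := by
        have := diag_mem n (A.1 0 0) (A.1 1 1) h1
        have hDe : D = ⟨!![A.1 0 0, 0; 0, A.1 1 1], by simp [Matrix.det_fin_two_of, h1]⟩ := by
          apply Subtype.ext; exact hD
        rw [hDe]; exact this
      exact (Hgen n).mul_mem hDmem (E12_mem n _)
    · -- Euclidean step
      set a := A.1 0 0 with ha
      set c := A.1 1 0 with hcc
      set q : ℕ := a.val / m with hq
      set r : ℕ := a.val % m with hrdef
      have hr : r < m := Nat.mod_lt _ hm
      have hdm : m * q + r = a.val := Nat.div_add_mod a.val m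
      set B := Sg n * (E12 n (q : ZMod n))⁻¹ * A with hBdef
      have hB : (B : Matrix (Fin 2) (Fin 2) (ZMod n))
          = !![-c, -(A.1 1 1); a - (q : ZMod n) * c, A.1 0 1 - (q : ZMod n) * (A.1 1 1)] := by
        have h1 : (B : Matrix (Fin 2) (Fin 2) (ZMod n))
            = !![0,-1;1,0] * !![1,-(q:ZMod n);0,1] * (A : Matrix (Fin 2) (Fin 2) (ZMod n)) := by
          rw [hBdef, E12_inv]; rfl
        rw [h1]
        nth_rewrite 1 [eta_SL2 n A]
        rw [Matrix.mul_fin_two, Matrix.mul_fin_two]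
        ext i j
        fin_cases i <;> fin_cases j <;> simp [← ha, ← hcc] <;> ring
      have hB10 : ((B : Matrix (Fin 2) (Fin 2) (ZMod n)) 1 0).val = r := by
        have hcast : a - (q : ZMod n) * c = ((r : ℕ) : ZMod n) := by
          have h2 : ((a.val : ℕ) : ZMod n) = a := by
            simp [ZMod.natCast_val, ZMod.cast_id]
          have h3 : ((m : ℕ) : ZMod n) = c := by
            rw [← hA]; simp [ZMod.natCast_val, ZMod.cast_id]
          have h4 : (((m * q + r : ℕ)) : ZMod n) = a := by rw [hdm, h2]
          push_cast at h4
          rw [h3] at h4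
          linear_combination -h4
        have h5 : (!![-c, -(A.1 1 1); a - (q : ZMod n) * c,
            A.1 0 1 - (q : ZMod n) * (A.1 1 1)] : Matrix (Fin 2) (Fin 2) (ZMod n)) 1 0
            = a - (q : ZMod n) * c := by simp
        rw [hB, h5, hcast]
        exact ZMod.val_cast_of_lt (lt_trans hr (hA ▸ ZMod.val_lt c))
      have hBmem : B ∈ Hgen n := IH r hr B hB10
      have hAeq : A = E12 n (q : ZMod n) * (Sg n)⁻¹ * B := by
        rw [hBdef]; group
      rw [hAeq]
      exact (Hgen n).mul_mem ((Hgen n).mul_mem (E12_mem n _) ((Hgen n).inv_mem (Sg_mem n))) hBmem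

lemma Hgen_eq_top : Hgen n = ⊤ := by
  rw [eq_top_iff]
  intro A _
  exact main_aux n _ A rfl

lemma mem_sp_det (e : AddAut (ZMod n × ZMod n)) (he : e ∈ SpGroup (hypPair n)) :
    Matrix.det (Mof n e) = 1 := by
  have h := he ((1,0) : ZMod n × ZMod n) ((0,1) : ZMod n × ZMod n)
  rw [hypPair_eq_iff] at h
  rw [Mof, Matrix.det_fin_two_of]
  have h2 : (e (1,0)).1 * (e (0,1)).2 - (e (1,0)).2 * (e (0,1)).1 = 1 := by simpa using h
  linear_combination h2

def autOf (M : SL2 n) : AddAut (ZMod n × ZMod n) where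
  toFun v := (M.1 0 0 * v.1 + M.1 0 1 * v.2, M.1 1 0 * v.1 + M.1 1 1 * v.2)
  invFun v := (M.1 1 1 * v.1 - M.1 0 1 * v.2, -(M.1 1 0) * v.1 + M.1 0 0 * v.2)
  left_inv v := by
    have hdet : M.1 0 0 * M.1 1 1 - M.1 0 1 * M.1 1 0 = 1 := by
      have := M.2; rwa [Matrix.det_fin_two] at this
    simp only [Prod.ext_iff]
    constructor
    · linear_combination v.1 * hdet
    · linear_combination v.2 * hdet
  right_inv v := by
    have hdet : M.1 0 0 * M.1 1 1 - M.1 0 1 * M.1 1 0 = 1 := by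
      have := M.2; rwa [Matrix.det_fin_two] at this
    simp only [Prod.ext_iff]
    constructor
    · linear_combination v.1 * hdet
    · linear_combination v.2 * hdet
  map_add' v w := by
    simp only [Prod.fst_add, Prod.snd_add, Prod.mk_add_mk, Prod.ext_iff]
    constructor <;> ring

lemma autOf_mem (M : SL2 n) : autOf n M ∈ SpGroup (hypPair n) := by
  intro a b
  have hdet : M.1 0 0 * M.1 1 1 - M.1 0 1 * M.1 1 0 = 1 := by
    have := M.2; rwa [Matrix.det_fin_two] at this
  rw [hypPair_eq_iff]
  show (M.1 0 0 * a.1 + M.1 0 1 * a.2) * (M.1 1 0 * b.1 + M.1 1 1 * b.2)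
      - (M.1 1 0 * a.1 + M.1 1 1 * a.2) * (M.1 0 0 * b.1 + M.1 0 1 * b.2)
      = a.1 * b.2 - a.2 * b.1
  linear_combination (a.1 * b.2 - a.2 * b.1) * hdet

noncomputable def spEquiv : SpGroup (hypPair n) ≃* SL2 n where
  toFun e := ⟨Mof n e.1, mem_sp_det n e.1 e.2⟩
  invFun M := ⟨autOf n M, autOf_mem n M⟩
  left_inv e := by
    apply Subtype.ext
    apply AddEquiv.ext
    intro v
    show (Mof n e.1 0 0 * v.1 + Mof n e.1 0 1 * v.2,
      Mof n e.1 1 0 * v.1 + Mof n e.1 1 1 * v.2) = e.1 v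
    exact (apply_eq n e.1 v).symm
  right_inv M := by
    apply Subtype.ext
    show Mof n (autOf n M) = M.1
    rw [Mof]
    conv_rhs => rw [Matrix.eta_fin_two M.1]
    have h1 : autOf n M ((1,0) : ZMod n × ZMod n) = (M.1 0 0, M.1 1 0) := by
      show (M.1 0 0 * 1 + M.1 0 1 * 0, M.1 1 0 * 1 + M.1 1 1 * 0) = _
      simp
    have h2 : autOf n M ((0,1) : ZMod n × ZMod n) = (M.1 0 1, M.1 1 1) := by
      show (M.1 0 0 * 0 + M.1 0 1 * 1, M.1 1 0 * 0 + M.1 1 1 * 1) = _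
      simp
    rw [h1, h2]
  map_mul' e g := by
    apply Subtype.ext
    show Mof n (e.1 * g.1) = Mof n e.1 * Mof n g.1
    have happ : ∀ v : ZMod n × ZMod n, (e.1 * g.1) v = e.1 (g.1 v) := fun _ => rfl
    rw [Mof, Mof, Mof, Matrix.mul_fin_two]
    rw [happ, happ, apply_eq n e.1 (g.1 (1,0)), apply_eq n e.1 (g.1 (0,1)),
      apply_eq n g.1 (1,0), apply_eq n g.1 (0,1)]
    ext i j
    fin_cases i <;> fin_cases j <;> simp [Mof] <;> ring

lemma su_mem : suAut n ∈ SpGroup (hypPair n) := by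
  intro a b
  rw [hypPair_eq_iff]
  show (a.1 - a.2) * b.2 - a.2 * (b.1 - b.2) = a.1 * b.2 - a.2 * b.1
  ring

lemma sv_mem : svAut n ∈ SpGroup (hypPair n) := by
  intro a b
  rw [hypPair_eq_iff]
  show a.1 * (b.2 + b.1) - (a.2 + a.1) * b.1 = a.1 * b.2 - a.2 * b.1
  ring

lemma spEquiv_su : spEquiv n ⟨suAut n, su_mem n⟩ = Tg n := by
  apply Subtype.ext
  show Mof n (suAut n) = !![1, -1; 0, 1]
  have h1 : suAut n ((1,0) : ZMod n × ZMod n) = (1, 0) := by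
    show ((1 : ZMod n) - 0, (0 : ZMod n)) = _; simp
  have h2 : suAut n ((0,1) : ZMod n × ZMod n) = (-1, 1) := by
    show ((0 : ZMod n) - 1, (1 : ZMod n)) = _; simp
  rw [Mof, h1, h2]

lemma spEquiv_sv : spEquiv n ⟨svAut n, sv_mem n⟩ = Lg n := by
  apply Subtype.ext
  show Mof n (svAut n) = !![1, 0; 1, 1]
  have h1 : svAut n ((1,0) : ZMod n × ZMod n) = (1, 1) := by
    show ((1 : ZMod n), (0 : ZMod n) + 1) = _; simp
  have h2 : svAut n ((0,1) : ZMod n × ZMod n) = (0, 1) := by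
    show ((0 : ZMod n), (1 : ZMod n) + 0) = _; simp
  rw [Mof, h1, h2]

/-- The isometry group of the hyperbolic group H_n is isomorphic to SL(2, Z/n) and is
generated by the two transvections s_{u₁} and s_{v₁}. -/
theorem stmt8 (n : ℕ) (hn : 0 < n) :
    Nonempty (SpGroup (hypPair n) ≃* Matrix.SpecialLinearGroup (Fin 2) (ZMod n)) ∧
    Subgroup.closure {x : SpGroup (hypPair n) |
        (x : AddAut (ZMod n × ZMod n)) = suAut n ∨
        (x : AddAut (ZMod n × ZMod n)) = svAut n} = ⊤ := by
  haveI : NeZero n := ⟨hn.ne'⟩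
  constructor
  · exact ⟨spEquiv n⟩
  · have himg : ((spEquiv n).toMonoidHom) '' {x : SpGroup (hypPair n) |
        (x : AddAut (ZMod n × ZMod n)) = suAut n ∨
        (x : AddAut (ZMod n × ZMod n)) = svAut n} = {Tg n, Lg n} := by
      apply Set.eq_of_subset_of_subset
      · rintro y ⟨x, hx, rfl⟩
        rcases hx with h | h
        · left
          have hx2 : x = ⟨suAut n, su_mem n⟩ := Subtype.ext h
          rw [hx2]; exact spEquiv_su n
        · right
          have hx2 : x = ⟨svAut n, sv_mem n⟩ := Subtype.ext h
          rw [hx2]; exact spEquiv_sv n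
      · rintro y (rfl | rfl)
        · exact ⟨⟨suAut n, su_mem n⟩, Or.inl rfl, spEquiv_su n⟩
        · exact ⟨⟨svAut n, sv_mem n⟩, Or.inr rfl, spEquiv_sv n⟩
    have h1 : Subgroup.map (spEquiv n).toMonoidHom (Subgroup.closure
        {x : SpGroup (hypPair n) |
          (x : AddAut (ZMod n × ZMod n)) = suAut n ∨
          (x : AddAut (ZMod n × ZMod n)) = svAut n})
        = Subgroup.map (spEquiv n).toMonoidHom ⊤ := by
      rw [MonoidHom.map_closure, himg]
      show Hgen n = _
      rw [Hgen_eq_top n, Subgroup.map_top_of_surjective _ (spEquiv n).surjective]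
    exact Subgroup.map_injective (spEquiv n).injective h1
end

section
/- Let a = (i,j) ∈ ℍ_n = ℤ/n × ℤ/n. If a has order n, then there exists A ∈ SL(2, ℤ/n) with A·a = (1,0). In general there exists A ∈ SL(2, ℤ/n) and l ∈ ℤ/n with A·a = (l,0). In particular, SL(2, ℤ/n) acts transitively on the elements of ℤ/n × ℤ/n of order n. -/
open Matrix

private lemma mulVec_two {R : Type*} [CommRing R] (p q r s u v : R) :
    (!![p, q; r, s]).mulVec ![u, v] = ![p*u + q*v, r*u + s*v] := by
  funext i
  fin_cases i <;>
    simp [Matrix.mulVec, dotProduct, Fin.sum_univ_two]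

/-- embedding x ↦ ![x,0] as an AddMonoidHom -/
private def singHom (n : ℕ) : ZMod n →+ (Fin 2 → ZMod n) where
  toFun x := ![x, 0]
  map_zero' := by funext i; fin_cases i <;> simp
  map_add' x y := by funext i; fin_cases i <;> simp

private def pairHom (n : ℕ) : (ZMod n × ZMod n) →+ (Fin 2 → ZMod n) where
  toFun p := ![p.1, p.2]
  map_zero' := by funext i; fin_cases i <;> simp
  map_add' x y := by funext i; fin_cases i <;> simp

private lemma key (n : ℕ) (hn : 0 < n) (a : ZMod n × ZMod n) :
    ∃ A : Matrix.SpecialLinearGroup (Fin 2) (ZMod n), ∃ l : ZMod n,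
      (A : Matrix (Fin 2) (Fin 2) (ZMod n)).mulVec ![a.1, a.2] = ![l, 0] := by
  haveI : NeZero n := ⟨hn.ne'⟩
  by_cases h0 : a = 0
  · refine ⟨1, 0, ?_⟩
    subst h0
    funext i
    fin_cases i <;>
      simp [Matrix.mulVec, dotProduct, Fin.sum_univ_two]
  · -- lift to integers
    set i : ℤ := (a.1.val : ℤ) with hi
    set j : ℤ := (a.2.val : ℤ) with hj
    have hai : ((i : ℤ) : ZMod n) = a.1 := by simp [hi, ZMod.natCast_val, ZMod.cast_id]
    have haj : ((j : ℤ) : ZMod n) = a.2 := by simp [hj, ZMod.natCast_val, ZMod.cast_id]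
    by_cases hz : i = 0 ∧ j = 0
    · exfalso
      apply h0
      have h1 : a.1 = 0 := by rw [← hai, hz.1]; simp
      have h2 : a.2 = 0 := by rw [← haj, hz.2]; simp
      exact Prod.ext h1 h2
    · set d : ℤ := (Int.gcd i j : ℤ) with hd
      have hdne : d ≠ 0 := by
        simp only [hd]
        exact_mod_cast fun h => hz (Int.gcd_eq_zero_iff.mp (by exact_mod_cast h))
      obtain ⟨i', hi'⟩ : d ∣ i := Int.gcd_dvd_left _ _
      obtain ⟨j', hj'⟩ : d ∣ j := Int.gcd_dvd_right _ _
      set x : ℤ := Int.gcdA i j with hx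
      set y : ℤ := Int.gcdB i j with hy
      have hbez : i * x + j * y = d := (Int.gcd_eq_gcd_ab i j).symm
      have hdet : x * i' + y * j' = 1 := by
        have : d * (x * i' + y * j') = d * 1 := by
          rw [mul_one]
          rw [hi', hj'] at hbez
          linarith [hbez]
        exact mul_left_cancel₀ hdne this
      -- integer SL2 matrix
      have hdetM : (!![x, y; -j', i'] : Matrix (Fin 2) (Fin 2) ℤ).det = 1 := by
        rw [Matrix.det_fin_two_of]
        ring_nf
        linarith [hdet]
      set Aℤ : Matrix.SpecialLinearGroup (Fin 2) ℤ := ⟨!![x, y; -j', i'], hdetM⟩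
      set A := Matrix.SpecialLinearGroup.map (Int.castRingHom (ZMod n)) Aℤ with hA
      refine ⟨A, (x : ZMod n) * a.1 + (y : ZMod n) * a.2, ?_⟩
      have hcoe : (A : Matrix (Fin 2) (Fin 2) (ZMod n)) =
          !![(x : ZMod n), (y : ZMod n); (-j' : ℤ), (i' : ℤ)] := by
        funext r c
        fin_cases r <;> fin_cases c <;>
          (simp only [hA, Aℤ]; erw [Matrix.SpecialLinearGroup.map_apply_coe]; simp [Matrix.map])
      rw [hcoe, mulVec_two]
      funext r
      fin_cases r
      · simp
      · show ((-j' : ℤ) : ZMod n) * a.1 + ((i' : ℤ) : ZMod n) * a.2 = 0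
        rw [← hai, ← haj, ← Int.cast_mul, ← Int.cast_mul, ← Int.cast_add]
        rw [hi', hj']
        push_cast
        ring

private lemma inv_mulVec (n : ℕ) (A : Matrix.SpecialLinearGroup (Fin 2) (ZMod n))
    (v : Fin 2 → ZMod n) :
    ((A⁻¹ : Matrix.SpecialLinearGroup (Fin 2) (ZMod n)) : Matrix (Fin 2) (Fin 2) (ZMod n)).mulVec
      ((A : Matrix (Fin 2) (Fin 2) (ZMod n)).mulVec v) = v := by
  rw [Matrix.mulVec_mulVec, ← Matrix.SpecialLinearGroup.coe_mul, inv_mul_cancel]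
  simp

private lemma mulVec_injective (n : ℕ) (A : Matrix.SpecialLinearGroup (Fin 2) (ZMod n)) :
    Function.Injective ((A : Matrix (Fin 2) (Fin 2) (ZMod n)).mulVec) := by
  intro u v h
  have := congrArg ((A⁻¹ : Matrix.SpecialLinearGroup (Fin 2) (ZMod n)) :
    Matrix (Fin 2) (Fin 2) (ZMod n)).mulVec h
  rwa [inv_mulVec, inv_mulVec] at this

private lemma key2 (n : ℕ) (hn : 0 < n) (a : ZMod n × ZMod n) (ha : addOrderOf a = n) :
    ∃ A : Matrix.SpecialLinearGroup (Fin 2) (ZMod n),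
      (A : Matrix (Fin 2) (Fin 2) (ZMod n)).mulVec ![a.1, a.2] = ![1, 0] := by
  haveI : NeZero n := ⟨hn.ne'⟩
  obtain ⟨A, l, hAl⟩ := key n hn a
  -- transfer addOrderOf
  have hpair : Function.Injective (pairHom n) := by
    intro p q h
    exact Prod.ext (congrFun h 0) (congrFun h 1)
  have hvec : addOrderOf (![a.1, a.2] : Fin 2 → ZMod n) = n := by
    have := addOrderOf_injective (pairHom n) hpair a
    rw [ha] at this
    exact this
  -- mulVec as add hom
  have hmul : addOrderOf (![l, 0] : Fin 2 → ZMod n) = n := by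
    rw [← hAl]
    have := addOrderOf_injective ((Matrix.mulVecLin
      (A : Matrix (Fin 2) (Fin 2) (ZMod n))).toAddMonoidHom) (mulVec_injective n A)
      (![a.1, a.2] : Fin 2 → ZMod n)
    simpa [Matrix.mulVecLin] using this.trans hvec
  have hsing : Function.Injective (singHom n) := by
    intro p q h
    exact congrFun h 0
  have hl : addOrderOf l = n := by
    have := addOrderOf_injective (singHom n) hsing l
    rw [← this]
    exact hmul
  -- l is a unit
  have hlval : ((l.val : ℕ) : ZMod n) = l := by
    simp [ZMod.natCast_val, ZMod.cast_id]
  have hgcd : n.gcd l.val = 1 := by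
    have h1 : addOrderOf ((l.val : ℕ) : ZMod n) = n / n.gcd l.val :=
      ZMod.addOrderOf_coe l.val hn.ne'
    rw [hlval, hl] at h1
    have hdvd : n.gcd l.val ∣ n := Nat.gcd_dvd_left _ _
    have h2 : n / n.gcd l.val * n.gcd l.val = n := Nat.div_mul_cancel hdvd
    rw [← h1] at h2
    have hle := Nat.le_of_dvd hn hdvd
    nlinarith
  have hunit : IsUnit l := by
    rw [← hlval]
    exact (ZMod.isUnit_iff_coprime l.val n).mpr (Nat.coprime_comm.mp hgcd)
  obtain ⟨u, hu⟩ := hunit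
  set k : ZMod n := ((u⁻¹ : (ZMod n)ˣ) : ZMod n) with hk
  have hkl : k * l = 1 := by
    rw [hk, ← hu, ← Units.val_mul, inv_mul_cancel, Units.val_one]
  have hdetM : (!![k, 0; 0, l] : Matrix (Fin 2) (Fin 2) (ZMod n)).det = 1 := by
    rw [Matrix.det_fin_two_of]
    simp [hkl]
  refine ⟨(show Matrix.SpecialLinearGroup (Fin 2) (ZMod n) from ⟨!![k, 0; 0, l], hdetM⟩) * A, ?_⟩
  rw [Matrix.SpecialLinearGroup.coe_mul, ← Matrix.mulVec_mulVec, hAl]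
  show (!![k, 0; 0, l]).mulVec ![l, 0] = ![1, 0]
  rw [mulVec_two]
  funext r
  fin_cases r <;> simp [hkl]

/-- Any a ∈ Z/n × Z/n can be moved by SL(2, Z/n) to a vector (l, 0); if a has order n
it can be moved to (1,0); in particular SL(2, Z/n) acts transitively on elements of
order n. -/
theorem stmt11 (n : ℕ) (hn : 0 < n) (a : ZMod n × ZMod n) :
    (∃ A : Matrix.SpecialLinearGroup (Fin 2) (ZMod n), ∃ l : ZMod n,
      (A : Matrix (Fin 2) (Fin 2) (ZMod n)).mulVec ![a.1, a.2] = ![l, 0]) ∧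
    (addOrderOf a = n → ∃ A : Matrix.SpecialLinearGroup (Fin 2) (ZMod n),
      (A : Matrix (Fin 2) (Fin 2) (ZMod n)).mulVec ![a.1, a.2] = ![1, 0]) ∧
    (∀ b : ZMod n × ZMod n, addOrderOf a = n → addOrderOf b = n →
      ∃ A : Matrix.SpecialLinearGroup (Fin 2) (ZMod n),
        (A : Matrix (Fin 2) (Fin 2) (ZMod n)).mulVec ![a.1, a.2] = ![b.1, b.2]) := by
  refine ⟨key n hn a, key2 n hn a, ?_⟩
  intro b ha hb
  obtain ⟨A, hA⟩ := key2 n hn a ha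
  obtain ⟨B, hB⟩ := key2 n hn b hb
  refine ⟨B⁻¹ * A, ?_⟩
  rw [Matrix.SpecialLinearGroup.coe_mul, ← Matrix.mulVec_mulVec, hA, ← hB, inv_mulVec]
end
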